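/- arXiv:1602.01697 — 2 statements merged into one kernel-verified Lean document; each statement's English description precedes it below -/
import Mathlib

section
/- If D is a directed graph of girth at least 5 with property S_k, then in the 3-tournament T_D any four vertices induce at least two triples sharing the same tail. -/
/-- A digraph `D` (given by its edge relation) has property `S_k`:
every set of `k` vertices is dominated by some vertex outside it. -/
def PropS {V : Type} (D : V → V → Prop) (k : ℕ) : Prop :=
  ∀ X : Finset V, X.card = k → ∃ v, v ∉ X ∧ ∀ x ∈ X, D v x

/-- The digraph `D` has girth at least `l`: no directed cycle of length `< l`. -/
def GirthAtLeast {V : Type} (D : V → V → Prop) (l : ℕ) : Prop :=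
  ∀ m : ℕ, 0 < m → m < l → ∀ c : ZMod m → V,
    Function.Injective c → ¬ (∀ i, D (c i) (c (i + 1)))

/-- A 3-tournament: every triple of vertices gets a designated tail belonging to it. -/
structure ThreeTournament (V : Type) where
  tail : Finset V → V
  tail_mem : ∀ A : Finset V, A.card = 3 → tail A ∈ A

/-- `X` dominates the 3-tournament `T`: every vertex outside `X`
lies in a triple whose tail is in `X`. -/
def Dominates {V : Type} (T : ThreeTournament V) (X : Finset V) : Prop :=
  ∀ v, v ∉ X → ∃ A : Finset V, A.card = 3 ∧ v ∈ A ∧ T.tail A ∈ X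

/-- `l` is a directed path in the subdigraph of `D` induced on `A`
(a nonempty list of distinct vertices of `A` with consecutive edges);
its length as a path is `l.length - 1`. -/
def IsPathOn {V : Type} (D : V → V → Prop) (A : Finset V) (l : List V) : Prop :=
  l ≠ [] ∧ l.Nodup ∧ (∀ x ∈ l, x ∈ A) ∧ l.Chain' D

/-- `x` is the starting vertex of a directed path of maximum length in `D[A]`. -/
def IsMaxPathStart {V : Type} (D : V → V → Prop) (A : Finset V) (x : V) : Prop :=
  ∃ l : List V, IsPathOn D A l ∧ l.head? = some x ∧
    ∀ l' : List V, IsPathOn D A l' → l'.length ≤ l.length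

/-- The defining property of the tail of the triple `A` in the tournament `T_D`:
`x` is the smallest (in the fixed linear order) starting vertex of a
maximum-length directed path in `D[A]`. -/
def TailSpec {V : Type} [LinearOrder V] (D : V → V → Prop) (A : Finset V) (x : V) : Prop :=
  IsMaxPathStart D A x ∧ ∀ y, IsMaxPathStart D A y → x ≤ y

section Char

variable {V : Type} [LinearOrder V] (D : V → V → Prop)

def H3 (x y z : V) : Prop :=
  (D x y ∧ D y z) ∨ (D x z ∧ D z y) ∨ (D y x ∧ D x z) ∨ (D y z ∧ D z x) ∨
  (D z x ∧ D x y) ∨ (D z y ∧ D y x)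

def S3 (x y z v : V) : Prop :=
  (v = x ∧ ((D x y ∧ D y z) ∨ (D x z ∧ D z y))) ∨
  (v = y ∧ ((D y x ∧ D x z) ∨ (D y z ∧ D z x))) ∨
  (v = z ∧ ((D z x ∧ D x y) ∨ (D z y ∧ D y x)))

def H2 (x y z : V) : Prop := D x y ∨ D y x ∨ D x z ∨ D z x ∨ D y z ∨ D z y

def S2 (x y z v : V) : Prop :=
  (v = x ∧ (D x y ∨ D x z)) ∨ (v = y ∧ (D y x ∨ D y z)) ∨ (v = z ∧ (D z x ∨ D z y))

def S1 (x y z v : V) : Prop := v = x ∨ v = y ∨ v = z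

def Starts (x y z v : V) : Prop :=
  (H3 D x y z ∧ S3 D x y z v) ∨ (¬H3 D x y z ∧ H2 D x y z ∧ S2 D x y z v) ∨
  (¬H3 D x y z ∧ ¬H2 D x y z ∧ S1 x y z v)

def TailLike (x y z t : V) : Prop :=
  Starts D x y z t ∧ ∀ w, Starts D x y z w → t ≤ w

lemma mem3 {x y z v : V} : v ∈ ({x, y, z} : Finset V) ↔ v = x ∨ v = y ∨ v = z := by simp

lemma card3 {x y z : V} (hxy : x ≠ y) (hxz : x ≠ z) (hyz : y ≠ z) :
    ({x, y, z} : Finset V).card = 3 := by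
  rw [Finset.card_insert_of_notMem (by simp [hxy, hxz]),
    Finset.card_insert_of_notMem (by simp [hyz]), Finset.card_singleton]

lemma len_le {x y z : V} (hxy : x ≠ y) (hxz : x ≠ z) (hyz : y ≠ z) {l : List V}
    (hl : IsPathOn D {x, y, z} l) : l.length ≤ 3 := by
  obtain ⟨-, hnd, hmem, -⟩ := hl
  calc l.length = l.toFinset.card := (List.toFinset_card_of_nodup hnd).symm
    _ ≤ ({x, y, z} : Finset V).card :=
        Finset.card_le_card (fun a ha => hmem a (List.mem_toFinset.mp ha))
    _ = 3 := card3 hxy hxz hyz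

lemma path1 {x y z v : V} (hv : v = x ∨ v = y ∨ v = z) : IsPathOn D {x, y, z} [v] := by
  refine ⟨by simp, by simp, ?_, by simp [List.Chain']⟩
  intro a ha; simp only [List.mem_singleton] at ha; subst ha; exact mem3.mpr hv

lemma path2 {x y z u v : V} (hu : u = x ∨ u = y ∨ u = z) (hv : v = x ∨ v = y ∨ v = z)
    (huv : u ≠ v) (hD : D u v) : IsPathOn D {x, y, z} [u, v] := by
  refine ⟨by simp, by simp [huv], ?_, by simp [List.Chain', hD]⟩
  intro a ha
  rcases (by simpa using ha : a = u ∨ a = v) with rfl | rfl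
  · exact mem3.mpr hu
  · exact mem3.mpr hv

lemma path3 {x y z p q r : V} (hp : p = x ∨ p = y ∨ p = z) (hq : q = x ∨ q = y ∨ q = z)
    (hr : r = x ∨ r = y ∨ r = z) (hpq : p ≠ q) (hpr : p ≠ r) (hqr : q ≠ r)
    (h1 : D p q) (h2 : D q r) : IsPathOn D {x, y, z} [p, q, r] := by
  refine ⟨by simp, by simp [hpq, hpr, hqr], ?_, by simp [List.Chain', h1, h2]⟩
  intro a ha
  rcases (by simpa using ha : a = p ∨ a = q ∨ a = r) with rfl | rfl | rfl
  · exact mem3.mpr hp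
  · exact mem3.mpr hq
  · exact mem3.mpr hr

lemma bash2 {x y z u v : V} (hu : u = x ∨ u = y ∨ u = z) (hv : v = x ∨ v = y ∨ v = z)
    (huv : u ≠ v) (hD : D u v) : H2 D x y z := by
  unfold H2
  rcases hu with rfl | rfl | rfl <;> rcases hv with rfl | rfl | rfl <;>
    first | exact absurd rfl huv | tauto

lemma bash2start {x y z u v : V} (hu : u = x ∨ u = y ∨ u = z) (hv : v = x ∨ v = y ∨ v = z)
    (huv : u ≠ v) (hD : D u v) : S2 D x y z u := by
  unfold S2
  rcases hu with rfl | rfl | rfl <;> rcases hv with rfl | rfl | rfl <;>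
    first | exact absurd rfl huv | tauto

lemma bash3 {x y z p q r : V} (hp : p = x ∨ p = y ∨ p = z) (hq : q = x ∨ q = y ∨ q = z)
    (hr : r = x ∨ r = y ∨ r = z) (hpq : p ≠ q) (hpr : p ≠ r) (hqr : q ≠ r)
    (h1 : D p q) (h2 : D q r) : H3 D x y z ∧ S3 D x y z p := by
  unfold H3 S3
  rcases hp with rfl | rfl | rfl <;> rcases hq with rfl | rfl | rfl <;>
    rcases hr with rfl | rfl | rfl <;>
    first
      | exact absurd rfl hpq | exact absurd rfl hpr | exact absurd rfl hqr
      | tauto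

lemma len3_extract {x y z : V} {l : List V} (hl : IsPathOn D {x, y, z} l)
    (h : 3 ≤ l.length) : H3 D x y z ∧ ∀ v, l.head? = some v → S3 D x y z v := by
  rcases l with _ | ⟨a, _ | ⟨b, _ | ⟨c, t⟩⟩⟩
  · simp at h
  · simp at h
  · simp at h
  · obtain ⟨-, hnd, hmem, hch⟩ := hl
    simp only [List.nodup_cons, List.mem_cons, not_or] at hnd
    obtain ⟨⟨hab, hac, -⟩, ⟨hbc, -⟩, -⟩ := hnd
    simp only [List.Chain', List.isChain_cons_cons] at hch
    obtain ⟨h1, h2, -⟩ := hch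
    have ha := mem3.mp (hmem a (by simp))
    have hb := mem3.mp (hmem b (by simp))
    have hc := mem3.mp (hmem c (by simp))
    obtain ⟨hH3, hS3⟩ := bash3 D ha hb hc hab hac hbc h1 h2
    refine ⟨hH3, fun v hv => ?_⟩
    simp only [List.head?_cons, Option.some.injEq] at hv
    exact hv ▸ hS3

lemma len2_extract {x y z : V} {l : List V} (hl : IsPathOn D {x, y, z} l)
    (h : 2 ≤ l.length) : H2 D x y z := by
  rcases l with _ | ⟨a, _ | ⟨b, t⟩⟩
  · simp at h
  · simp at h
  · obtain ⟨-, hnd, hmem, hch⟩ := hl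
    simp only [List.nodup_cons, List.mem_cons, not_or] at hnd
    obtain ⟨⟨hab, -⟩, -⟩ := hnd
    simp only [List.Chain', List.isChain_cons_cons] at hch
    exact bash2 D (mem3.mp (hmem a (by simp))) (mem3.mp (hmem b (by simp))) hab hch.1

lemma starts_mem {x y z v : V} (h : Starts D x y z v) : v = x ∨ v = y ∨ v = z := by
  unfold Starts S3 S2 S1 at h; tauto

lemma ismax_iff {x y z v : V} (hxy : x ≠ y) (hxz : x ≠ z) (hyz : y ≠ z) :
    IsMaxPathStart D {x, y, z} v ↔ Starts D x y z v := by
  constructor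
  · rintro ⟨l, hp, hh, hmax⟩
    obtain ⟨a, t, rfl⟩ : ∃ a t, l = a :: t := by
      cases l with
      | nil => exact absurd rfl hp.1
      | cons a t => exact ⟨a, t, rfl⟩
    have hav : a = v := by simpa using hh
    subst hav
    by_cases h3 : H3 D x y z
    · have h3le : 3 ≤ (a :: t).length := by
        unfold H3 at h3
        rcases h3 with ⟨h1, h2⟩ | ⟨h1, h2⟩ | ⟨h1, h2⟩ | ⟨h1, h2⟩ | ⟨h1, h2⟩ | ⟨h1, h2⟩
        · exact hmax [x, y, z] (path3 D (by tauto) (by tauto) (by tauto) hxy hxz hyz h1 h2)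
        · exact hmax [x, z, y] (path3 D (by tauto) (by tauto) (by tauto) hxz hxy hyz.symm h1 h2)
        · exact hmax [y, x, z] (path3 D (by tauto) (by tauto) (by tauto) hxy.symm hyz hxz h1 h2)
        · exact hmax [y, z, x] (path3 D (by tauto) (by tauto) (by tauto) hyz hxy.symm hxz.symm h1 h2)
        · exact hmax [z, x, y] (path3 D (by tauto) (by tauto) (by tauto) hxz.symm hyz.symm hxy h1 h2)
        · exact hmax [z, y, x] (path3 D (by tauto) (by tauto) (by tauto) hyz.symm hxz.symm hxy.symm h1 h2)
      exact Or.inl ⟨h3, (len3_extract D hp h3le).2 a rfl⟩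
    · by_cases h2 : H2 D x y z
      · have h2le : 2 ≤ (a :: t).length := by
          unfold H2 at h2
          rcases h2 with h | h | h | h | h | h
          · exact hmax [x, y] (path2 D (by tauto) (by tauto) hxy h)
          · exact hmax [y, x] (path2 D (by tauto) (by tauto) hxy.symm h)
          · exact hmax [x, z] (path2 D (by tauto) (by tauto) hxz h)
          · exact hmax [z, x] (path2 D (by tauto) (by tauto) hxz.symm h)
          · exact hmax [y, z] (path2 D (by tauto) (by tauto) hyz h)
          · exact hmax [z, y] (path2 D (by tauto) (by tauto) hyz.symm h)
        rcases t with _ | ⟨b, _ | ⟨c, t'⟩⟩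
        · simp at h2le
        · obtain ⟨-, hnd, hmem, hch⟩ := hp
          simp only [List.nodup_cons, List.mem_cons, not_or] at hnd
          simp only [List.Chain', List.isChain_cons_cons] at hch
          refine Or.inr (Or.inl ⟨h3, h2, bash2start D (mem3.mp (hmem a (by simp)))
            (mem3.mp (hmem b (by simp))) (by tauto) ?_⟩)
          · exact hch.1
        · exact absurd (len3_extract D hp (by simp)).1 h3
      · refine Or.inr (Or.inr ⟨h3, h2, ?_⟩)
        exact mem3.mp (hp.2.2.1 a (by simp))
  · intro hs
    rcases hs with ⟨h3, hs3⟩ | ⟨h3, h2, hs2⟩ | ⟨h3, h2, hs1⟩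
    · unfold S3 at hs3
      have hbound : ∀ l' : List V, IsPathOn D {x, y, z} l' → l'.length ≤ 3 :=
        fun l' hl' => len_le D hxy hxz hyz hl'
      rcases hs3 with ⟨he, ⟨e1, e2⟩ | ⟨e1, e2⟩⟩ | ⟨he, ⟨e1, e2⟩ | ⟨e1, e2⟩⟩ |
        ⟨he, ⟨e1, e2⟩ | ⟨e1, e2⟩⟩ <;> rw [he]
      · exact ⟨[x, y, z], path3 D (by tauto) (by tauto) (by tauto) hxy hxz hyz e1 e2, rfl, hbound⟩
      · exact ⟨[x, z, y], path3 D (by tauto) (by tauto) (by tauto) hxz hxy hyz.symm e1 e2, rfl, hbound⟩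
      · exact ⟨[y, x, z], path3 D (by tauto) (by tauto) (by tauto) hxy.symm hyz hxz e1 e2, rfl, hbound⟩
      · exact ⟨[y, z, x], path3 D (by tauto) (by tauto) (by tauto) hyz hxy.symm hxz.symm e1 e2, rfl, hbound⟩
      · exact ⟨[z, x, y], path3 D (by tauto) (by tauto) (by tauto) hxz.symm hyz.symm hxy e1 e2, rfl, hbound⟩
      · exact ⟨[z, y, x], path3 D (by tauto) (by tauto) (by tauto) hyz.symm hxz.symm hxy.symm e1 e2, rfl, hbound⟩
    · have hbound : ∀ l' : List V, IsPathOn D {x, y, z} l' → l'.length ≤ 2 := by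
        intro l' hl'
        by_contra hlen
        push_neg at hlen
        exact h3 (len3_extract D hl' (by omega)).1
      unfold S2 at hs2
      rcases hs2 with ⟨he, e | e⟩ | ⟨he, e | e⟩ | ⟨he, e | e⟩ <;> rw [he]
      · exact ⟨[x, y], path2 D (by tauto) (by tauto) hxy e, rfl, hbound⟩
      · exact ⟨[x, z], path2 D (by tauto) (by tauto) hxz e, rfl, hbound⟩
      · exact ⟨[y, x], path2 D (by tauto) (by tauto) hxy.symm e, rfl, hbound⟩
      · exact ⟨[y, z], path2 D (by tauto) (by tauto) hyz e, rfl, hbound⟩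
      · exact ⟨[z, x], path2 D (by tauto) (by tauto) hxz.symm e, rfl, hbound⟩
      · exact ⟨[z, y], path2 D (by tauto) (by tauto) hyz.symm e, rfl, hbound⟩
    · refine ⟨[v], path1 D hs1, rfl, ?_⟩
      intro l' hl'
      by_contra hlen
      push_neg at hlen
      simp only [List.length_singleton] at hlen
      exact h2 (len2_extract D hl' (by omega))

lemma tailspec_iff {x y z t : V} (hxy : x ≠ y) (hxz : x ≠ z) (hyz : y ≠ z) :
    TailSpec D {x, y, z} t ↔ TailLike D x y z t := by
  unfold TailSpec TailLike
  constructor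
  · rintro ⟨h1, h2⟩
    exact ⟨(ismax_iff D hxy hxz hyz).1 h1, fun w hw => h2 w ((ismax_iff D hxy hxz hyz).2 hw)⟩
  · rintro ⟨h1, h2⟩
    exact ⟨(ismax_iff D hxy hxz hyz).2 h1, fun w hw => h2 w ((ismax_iff D hxy hxz hyz).1 hw)⟩

end Char


lemma starts_exists {V : Type} [LinearOrder V] (D : V → V → Prop) (x y z : V) :
    Starts D x y z x ∨ Starts D x y z y ∨ Starts D x y z z := by
  by_cases h3 : H3 D x y z
  · have h3' := h3
    unfold H3 at h3'
    unfold Starts S3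
    rcases h3' with ⟨a, b⟩ | ⟨a, b⟩ | ⟨a, b⟩ | ⟨a, b⟩ | ⟨a, b⟩ | ⟨a, b⟩
    · exact Or.inl (Or.inl ⟨h3, Or.inl ⟨rfl, Or.inl ⟨a, b⟩⟩⟩)
    · exact Or.inl (Or.inl ⟨h3, Or.inl ⟨rfl, Or.inr ⟨a, b⟩⟩⟩)
    · exact Or.inr (Or.inl (Or.inl ⟨h3, Or.inr (Or.inl ⟨rfl, Or.inl ⟨a, b⟩⟩)⟩))
    · exact Or.inr (Or.inl (Or.inl ⟨h3, Or.inr (Or.inl ⟨rfl, Or.inr ⟨a, b⟩⟩)⟩))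
    · exact Or.inr (Or.inr (Or.inl ⟨h3, Or.inr (Or.inr ⟨rfl, Or.inl ⟨a, b⟩⟩)⟩))
    · exact Or.inr (Or.inr (Or.inl ⟨h3, Or.inr (Or.inr ⟨rfl, Or.inr ⟨a, b⟩⟩)⟩))
  · by_cases h2 : H2 D x y z
    · have h2' := h2
      unfold H2 at h2'
      unfold Starts S2
      rcases h2' with a | a | a | a | a | a
      · exact Or.inl (Or.inr (Or.inl ⟨h3, h2, Or.inl ⟨rfl, Or.inl a⟩⟩))
      · exact Or.inr (Or.inl (Or.inr (Or.inl ⟨h3, h2, Or.inr (Or.inl ⟨rfl, Or.inl a⟩)⟩)))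
      · exact Or.inl (Or.inr (Or.inl ⟨h3, h2, Or.inl ⟨rfl, Or.inr a⟩⟩))
      · exact Or.inr (Or.inr (Or.inr (Or.inl ⟨h3, h2, Or.inr (Or.inr ⟨rfl, Or.inl a⟩)⟩)))
      · exact Or.inr (Or.inl (Or.inr (Or.inl ⟨h3, h2, Or.inr (Or.inl ⟨rfl, Or.inr a⟩)⟩)))
      · exact Or.inr (Or.inr (Or.inr (Or.inl ⟨h3, h2, Or.inr (Or.inr ⟨rfl, Or.inr a⟩)⟩)))
    · exact Or.inl (Or.inr (Or.inr ⟨h3, h2, Or.inl rfl⟩))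

/-- Boolean version of `Starts` over `Fin 4`. -/
def SB (R : Fin 4 → Fin 4 → Bool) (x y z v : Fin 4) : Bool :=
  (((R x y && R y z) || ((R x z && R z y) || ((R y x && R x z) || ((R y z && R z x) ||
      ((R z x && R x y) || (R z y && R y x)))))) &&
    ((v == x && ((R x y && R y z) || (R x z && R z y))) ||
     ((v == y && ((R y x && R x z) || (R y z && R z x))) ||
     (v == z && ((R z x && R x y) || (R z y && R y x)))))) ||
  (((!((R x y && R y z) || ((R x z && R z y) || ((R y x && R x z) || ((R y z && R z x) ||
      ((R z x && R x y) || (R z y && R y x)))))) &&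
    ((R x y || (R y x || (R x z || (R z x || (R y z || R z y))))) &&
    ((v == x && (R x y || R x z)) || ((v == y && (R y x || R y z)) ||
     (v == z && (R z x || R z y)))))) ||
  (!((R x y && R y z) || ((R x z && R z y) || ((R y x && R x z) || ((R y z && R z x) ||
      ((R z x && R x y) || (R z y && R y x)))))) &&
    (!(R x y || (R y x || (R x z || (R z x || (R y z || R z y))))) &&
    (v == x || (v == y || v == z))))))

lemma SB_iff (R : Fin 4 → Fin 4 → Bool) (x y z v : Fin 4) :
    SB R x y z v = true ↔ Starts (fun a b => R a b = true) x y z v := by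
  unfold SB Starts H3 S3 H2 S2 S1
  simp only [Bool.or_eq_true, Bool.and_eq_true, Bool.not_eq_true', Bool.eq_false_iff,
    beq_iff_eq, ne_eq]

def tailOf (R : Fin 4 → Fin 4 → Bool) (x y z : Fin 4) : Fin 4 :=
  cond (SB R x y z x) x (cond (SB R x y z y) y z)

lemma tailOf_taillike (R : Fin 4 → Fin 4 → Bool) (x y z : Fin 4) (hxy : x < y) (hyz : y < z) :
    TailLike (fun a b => R a b = true) x y z (tailOf R x y z) := by
  have hex := starts_exists (fun a b => R a b = true) x y z
  unfold tailOf
  cases hx : SB R x y z x with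
  | true =>
    rw [cond_true]
    refine ⟨(SB_iff R x y z x).mp hx, fun w hw => ?_⟩
    rcases starts_mem _ hw with rfl | rfl | rfl
    · exact le_refl _
    · exact hxy.le
    · exact (hxy.trans hyz).le
  | false =>
    rw [cond_false]
    have hnx : ¬ Starts (fun a b => R a b = true) x y z x := fun hs => by
      have := (SB_iff R x y z x).mpr hs
      rw [hx] at this
      exact Bool.false_ne_true this
    cases hy : SB R x y z y with
    | true =>
      rw [cond_true]
      refine ⟨(SB_iff R x y z y).mp hy, fun w hw => ?_⟩
      rcases starts_mem _ hw with rfl | rfl | rfl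
      · exact absurd hw hnx
      · exact le_refl _
      · exact hyz.le
    | false =>
      rw [cond_false]
      have hny : ¬ Starts (fun a b => R a b = true) x y z y := fun hs => by
        have := (SB_iff R x y z y).mpr hs
        rw [hy] at this
        exact Bool.false_ne_true this
      have hz : Starts (fun a b => R a b = true) x y z z := by
        rcases hex with h | h | h
        · exact absurd h hnx
        · exact absurd h hny
        · exact h
      refine ⟨hz, fun w hw => ?_⟩
      rcases starts_mem _ hw with rfl | rfl | rfl
      · exact absurd hw hnx
      · exact absurd hw hny
      · exact le_refl _

def Rm (b01 b02 b03 b10 b12 b13 b20 b21 b23 b30 b31 b32 : Bool) : Fin 4 → Fin 4 → Bool :=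
  fun i j => match i.val, j.val with
  | 0, 1 => b01 | 0, 2 => b02 | 0, 3 => b03
  | 1, 0 => b10 | 1, 2 => b12 | 1, 3 => b13
  | 2, 0 => b20 | 2, 1 => b21 | 2, 3 => b23
  | 3, 0 => b30 | 3, 1 => b31 | 3, 2 => b32
  | _, _ => false

def t1 : Fin 4 → Fin 4 := ![1, 0, 0, 0]
def t2 : Fin 4 → Fin 4 := ![2, 2, 1, 1]
def t3 : Fin 4 → Fin 4 := ![3, 3, 3, 2]

lemma tfacts : ∀ m : Fin 4, t1 m < t2 m ∧ t2 m < t3 m ∧ m ≠ t1 m ∧ m ≠ t2 m ∧ m ≠ t3 m := by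
  decide

lemma tmem : ∀ m n : Fin 4, m ≠ n → (m = t1 n ∨ m = t2 n ∨ m = t3 n) := by decide

set_option maxRecDepth 40000 in
set_option maxHeartbeats 16000000 in
set_option synthInstance.maxSize 4000 in
set_option synthInstance.maxHeartbeats 2000000 in
lemma core : ∀ b01 b02 b03 b10 b12 b13 b20 b21 b23 b30 b31 b32 : Bool,
    (b01 && b10) = false → (b02 && b20) = false → (b03 && b30) = false →
    (b12 && b21) = false → (b13 && b31) = false → (b23 && b32) = false →
    (b01 && b12 && b20) = false → (b10 && b02 && b21) = false →
    (b01 && b13 && b30) = false → (b10 && b03 && b31) = false →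
    (b02 && b23 && b30) = false → (b20 && b03 && b32) = false →
    (b12 && b23 && b31) = false → (b21 && b13 && b32) = false →
    (b01 && b12 && b23 && b30) = false → (b10 && b03 && b32 && b21) = false →
    (b01 && b13 && b32 && b20) = false → (b10 && b02 && b23 && b31) = false →
    (b02 && b21 && b13 && b30) = false → (b20 && b03 && b31 && b12) = false →
    ∃ i j : Fin 4, i ≠ j ∧
      tailOf (Rm b01 b02 b03 b10 b12 b13 b20 b21 b23 b30 b31 b32) (t1 i) (t2 i) (t3 i) =
      tailOf (Rm b01 b02 b03 b10 b12 b13 b20 b21 b23 b30 b31 b32) (t1 j) (t2 j) (t3 j) := by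
  decide

lemma starts_transfer {V : Type} [LinearOrder V] (D : V → V → Prop) (f : Fin 4 ↪o V)
    (R : Fin 4 → Fin 4 → Bool) (hR : ∀ a b, R a b = true ↔ D (f a) (f b))
    (x y z m : Fin 4) :
    Starts (fun a b => R a b = true) x y z m ↔ Starts D (f x) (f y) (f z) (f m) := by
  unfold Starts H3 S3 H2 S2 S1
  simp only [hR, f.injective.eq_iff]

lemma taillike_to_spec {V : Type} [LinearOrder V] (D : V → V → Prop) (f : Fin 4 ↪o V)
    (R : Fin 4 → Fin 4 → Bool) (hR : ∀ a b, R a b = true ↔ D (f a) (f b))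
    {x y z t : Fin 4} (hxy : x < y) (hyz : y < z)
    (h : TailLike (fun a b => R a b = true) x y z t) :
    TailSpec D {f x, f y, f z} (f t) := by
  have hfxy : f x ≠ f y := (f.strictMono hxy).ne
  have hfxz : f x ≠ f z := (f.strictMono (hxy.trans hyz)).ne
  have hfyz : f y ≠ f z := (f.strictMono hyz).ne
  rw [tailspec_iff D hfxy hfxz hfyz]
  refine ⟨(starts_transfer D f R hR x y z t).mp h.1, fun w hw => ?_⟩
  rcases starts_mem D hw with rfl | rfl | rfl
  · exact f.monotone (h.2 x ((starts_transfer D f R hR x y z x).mpr hw))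
  · exact f.monotone (h.2 y ((starts_transfer D f R hR x y z y).mpr hw))
  · exact f.monotone (h.2 z ((starts_transfer D f R hR x y z z).mpr hw))

lemma main_aux {V : Type} [LinearOrder V] (D : V → V → Prop) (T : ThreeTournament V)
    (hT : ∀ A : Finset V, A.card = 3 → TailSpec D A (T.tail A)) (f : Fin 4 ↪o V)
    (R : Fin 4 → Fin 4 → Bool) (hR : ∀ a b, R a b = true ↔ D (f a) (f b))
    (x y z : Fin 4) (hxy : x < y) (hyz : y < z) :
    T.tail {f x, f y, f z} = f (tailOf R x y z) := by
  have h1 : TailLike (fun a b => R a b = true) x y z (tailOf R x y z) :=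
    tailOf_taillike R x y z hxy hyz
  have h2 := taillike_to_spec D f R hR hxy hyz h1
  have hfxy : f x ≠ f y := (f.strictMono hxy).ne
  have hfxz : f x ≠ f z := (f.strictMono (hxy.trans hyz)).ne
  have hfyz : f y ≠ f z := (f.strictMono hyz).ne
  have h3 := hT {f x, f y, f z} (card3 hfxy hfxz hfyz)
  exact le_antisymm (h3.2 _ h2.1) (h2.2 _ h3.1)

lemma ne_sets {V : Type} [LinearOrder V] (f : Fin 4 ↪o V) {a b c a' b' c' m : Fin 4}
    (h2 : m = a' ∨ m = b' ∨ m = c') (n1 : m ≠ a) (n2 : m ≠ b) (n3 : m ≠ c) :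
    ({f a, f b, f c} : Finset V) ≠ {f a', f b', f c'} := by
  intro h
  have hm : f m ∈ ({f a', f b', f c'} : Finset V) := by
    rcases h2 with rfl | rfl | rfl <;> simp
  rw [← h] at hm
  rcases mem3.mp hm with h' | h' | h'
  · exact n1 (f.injective h')
  · exact n2 (f.injective h')
  · exact n3 (f.injective h')

/-- If `D` has girth at least 5 and property `S_k`, then in the 3-tournament `T_D`
any four vertices induce at least two triples sharing the same tail. -/
theorem stmt1 {V : Type} [Fintype V] [LinearOrder V] (D : V → V → Prop) (k : ℕ)
    (hg : GirthAtLeast D 5) (hS : PropS D k)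
    (T : ThreeTournament V) (hT : ∀ A : Finset V, A.card = 3 → TailSpec D A (T.tail A)) :
    ∀ B : Finset V, B.card = 4 →
      ∃ A₁ A₂ : Finset V, A₁ ⊆ B ∧ A₂ ⊆ B ∧ A₁.card = 3 ∧ A₂.card = 3 ∧
        A₁ ≠ A₂ ∧ T.tail A₁ = T.tail A₂ := by
  intro B hB
  classical
  -- no short cycles
  have noloop : ∀ v : V, ¬ D v v := by
    intro v hv
    exact hg 1 one_pos (by norm_num) (fun _ => v)
      (fun a b _ => Subsingleton.elim a b) (fun _ => hv)
  have no2 : ∀ u v : V, u ≠ v → D u v → D v u → False := by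
    intro u v huv h1 h2
    refine hg 2 (by norm_num) (by norm_num) (fun z : ZMod 2 => ![u, v] z) ?_ ?_
    · intro a b hab
      fin_cases a <;> fin_cases b <;>
        first | rfl | exact absurd hab huv | exact absurd hab huv.symm
    · intro i
      fin_cases i
      · exact h1
      · exact h2
  have no3 : ∀ u v w : V, u ≠ v → u ≠ w → v ≠ w → D u v → D v w → D w u → False := by
    intro u v w huv huw hvw h1 h2 h3
    refine hg 3 (by norm_num) (by norm_num) (fun z : ZMod 3 => ![u, v, w] z) ?_ ?_
    · intro a b hab
      fin_cases a <;> fin_cases b <;>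
        first | rfl | exact absurd hab huv | exact absurd hab huv.symm |
          exact absurd hab huw | exact absurd hab huw.symm |
          exact absurd hab hvw | exact absurd hab hvw.symm
    · intro i
      fin_cases i
      · exact h1
      · exact h2
      · exact h3
  have no4 : ∀ u v w p : V, u ≠ v → u ≠ w → u ≠ p → v ≠ w → v ≠ p → w ≠ p →
      D u v → D v w → D w p → D p u → False := by
    intro u v w p huv huw hup hvw hvp hwp h1 h2 h3 h4
    refine hg 4 (by norm_num) (by norm_num) (fun z : ZMod 4 => ![u, v, w, p] z) ?_ ?_
    · intro a b hab
      fin_cases a <;> fin_cases b <;>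
        first | rfl | exact absurd hab huv | exact absurd hab huv.symm |
          exact absurd hab huw | exact absurd hab huw.symm |
          exact absurd hab hup | exact absurd hab hup.symm |
          exact absurd hab hvw | exact absurd hab hvw.symm |
          exact absurd hab hvp | exact absurd hab hvp.symm |
          exact absurd hab hwp | exact absurd hab hwp.symm
    · intro i
      fin_cases i
      · exact h1
      · exact h2
      · exact h3
      · exact h4
  let f : Fin 4 ↪o V := B.orderEmbOfFin hB
  let R : Fin 4 → Fin 4 → Bool := fun a b => decide (D (f a) (f b))
  have hR : ∀ a b : Fin 4, R a b = true ↔ D (f a) (f b) := by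
    intro a b; simp [R]
  have hD2 : ∀ a b : Fin 4, a ≠ b → (R a b && R b a) = false := by
    intro a b hab
    cases h : (R a b && R b a) with
    | false => rfl
    | true =>
      rw [Bool.and_eq_true] at h
      exact absurd ((hR a b).mp h.1) (fun d1 =>
        no2 (f a) (f b) (f.injective.ne hab) d1 ((hR b a).mp h.2))
  have hD3 : ∀ a b c : Fin 4, a ≠ b → a ≠ c → b ≠ c →
      (R a b && R b c && R c a) = false := by
    intro a b c hab hac hbc
    cases h : (R a b && R b c && R c a) with
    | false => rfl
    | true =>
      rw [Bool.and_eq_true, Bool.and_eq_true] at h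
      obtain ⟨⟨e1, e2⟩, e3⟩ := h
      exact absurd rfl (fun _ : true = true => no3 (f a) (f b) (f c) (f.injective.ne hab) (f.injective.ne hac)
        (f.injective.ne hbc) ((hR a b).mp e1) ((hR b c).mp e2) ((hR c a).mp e3))
  have hD4 : ∀ a b c d : Fin 4, a ≠ b → a ≠ c → a ≠ d → b ≠ c → b ≠ d → c ≠ d →
      (R a b && R b c && R c d && R d a) = false := by
    intro a b c d hab hac had hbc hbd hcd
    cases h : (R a b && R b c && R c d && R d a) with
    | false => rfl
    | true =>
      rw [Bool.and_eq_true, Bool.and_eq_true, Bool.and_eq_true] at h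
      obtain ⟨⟨⟨e1, e2⟩, e3⟩, e4⟩ := h
      exact absurd rfl (fun _ : true = true => no4 (f a) (f b) (f c) (f d) (f.injective.ne hab) (f.injective.ne hac)
        (f.injective.ne had) (f.injective.ne hbc) (f.injective.ne hbd) (f.injective.ne hcd)
        ((hR a b).mp e1) ((hR b c).mp e2) ((hR c d).mp e3) ((hR d a).mp e4))
  obtain ⟨i, j, hij, ht⟩ := core (R 0 1) (R 0 2) (R 0 3) (R 1 0) (R 1 2) (R 1 3)
    (R 2 0) (R 2 1) (R 2 3) (R 3 0) (R 3 1) (R 3 2)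
    (hD2 0 1 (by decide)) (hD2 0 2 (by decide)) (hD2 0 3 (by decide))
    (hD2 1 2 (by decide)) (hD2 1 3 (by decide)) (hD2 2 3 (by decide))
    (hD3 0 1 2 (by decide) (by decide) (by decide))
    (hD3 1 0 2 (by decide) (by decide) (by decide))
    (hD3 0 1 3 (by decide) (by decide) (by decide))
    (hD3 1 0 3 (by decide) (by decide) (by decide))
    (hD3 0 2 3 (by decide) (by decide) (by decide))
    (hD3 2 0 3 (by decide) (by decide) (by decide))
    (hD3 1 2 3 (by decide) (by decide) (by decide))
    (hD3 2 1 3 (by decide) (by decide) (by decide))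
    (hD4 0 1 2 3 (by decide) (by decide) (by decide) (by decide) (by decide) (by decide))
    (hD4 1 0 3 2 (by decide) (by decide) (by decide) (by decide) (by decide) (by decide))
    (hD4 0 1 3 2 (by decide) (by decide) (by decide) (by decide) (by decide) (by decide))
    (hD4 1 0 2 3 (by decide) (by decide) (by decide) (by decide) (by decide) (by decide))
    (hD4 0 2 1 3 (by decide) (by decide) (by decide) (by decide) (by decide) (by decide))
    (hD4 2 0 3 1 (by decide) (by decide) (by decide) (by decide) (by decide) (by decide))
  have hRM : ∀ a b : Fin 4,
      (Rm (R 0 1) (R 0 2) (R 0 3) (R 1 0) (R 1 2) (R 1 3)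
        (R 2 0) (R 2 1) (R 2 3) (R 3 0) (R 3 1) (R 3 2) a b = true) ↔ D (f a) (f b) := by
    intro a b
    fin_cases a <;> fin_cases b <;>
      first
        | exact iff_of_false (fun h => Bool.false_ne_true h) (noloop _)
        | exact hR _ _
  obtain ⟨hti12, hti23, htin1, htin2, htin3⟩ := tfacts i
  obtain ⟨htj12, htj23, htjn1, htjn2, htjn3⟩ := tfacts j
  refine ⟨{f (t1 i), f (t2 i), f (t3 i)}, {f (t1 j), f (t2 j), f (t3 j)}, ?_, ?_, ?_, ?_, ?_, ?_⟩
  · intro a ha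
    rcases mem3.mp ha with rfl | rfl | rfl <;> exact B.orderEmbOfFin_mem hB _
  · intro a ha
    rcases mem3.mp ha with rfl | rfl | rfl <;> exact B.orderEmbOfFin_mem hB _
  · exact card3 (f.strictMono hti12).ne (f.strictMono (hti12.trans hti23)).ne
      (f.strictMono hti23).ne
  · exact card3 (f.strictMono htj12).ne (f.strictMono (htj12.trans htj23)).ne
      (f.strictMono htj23).ne
  · exact ne_sets f (tmem i j hij) htin1 htin2 htin3
  · rw [main_aux D T hT f _ hRM (t1 i) (t2 i) (t3 i) hti12 hti23,
      main_aux D T hT f _ hRM (t1 j) (t2 j) (t3 j) htj12 htj23, ht]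
end

section
/- In a finite acyclic digraph with at least one edge, if x is the starting vertex of a directed path of maximum length whose first edge is xy, then there is no directed path of length 2 ending at y. -/
/-- `D` has no directed cycle. -/
def Acyclic {V : Type} (D : V → V → Prop) : Prop :=
  ∀ m : ℕ, 0 < m → ∀ c : ZMod m → V, Function.Injective c →
    ¬ (∀ i, D (c i) (c (i + 1)))

/-- `l` is a directed path in `D` (its length as a path is `l.length - 1`). -/
def IsPath {V : Type} (D : V → V → Prop) (l : List V) : Prop :=
  l ≠ [] ∧ l.Nodup ∧ l.Chain' D

lemma closed_chain_absurd {V : Type} {D : V → V → Prop} (hac : Acyclic D)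
    (p : List V) (hne : p ≠ []) (hnd : p.Nodup) (hch : p.Chain' D)
    (hcl : D (p.getLast hne) (p.head hne)) : False := by
  have hn : 0 < p.length := List.length_pos_iff.mpr hne
  haveI : NeZero p.length := ⟨hn.ne'⟩
  set n := p.length with hndef
  let c : ZMod n → V := fun i => p.get ⟨i.val, ZMod.val_lt i⟩
  have hinj : Function.Injective c := by
    intro i j h
    apply ZMod.val_injective n
    have := List.nodup_iff_injective_get.mp hnd h
    exact congrArg Fin.val this
  have hval : ∀ i : ZMod n, (i + 1).val = (i.val + 1) % n := by
    intro i
    rw [ZMod.val_add, ZMod.val_one_eq_one_mod, Nat.add_mod_mod]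
  refine hac n hn c hinj ?_
  intro i
  by_cases h : i.val + 1 < n
  · have h2 : (i + 1).val = i.val + 1 := by rw [hval, Nat.mod_eq_of_lt h]
    have := List.isChain_iff_getElem.mp hch i.val (by omega)
    simpa [c, h2] using this
  · have h1 : i.val = n - 1 := by have := ZMod.val_lt i; omega
    have h2 : (i + 1).val = 0 := by rw [hval, h1]; simp [Nat.sub_add_cancel hn]
    have hlast : c i = p.getLast hne := by
      rw [List.getLast_eq_getElem]; simp [c, h1, hndef]
    have hhead : c (i + 1) = p.head hne := by
      simp only [c, h2]
      cases p with
      | nil => exact absurd rfl hne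
      | cons a t => rfl
    rw [hlast, hhead]; exact hcl

/-- In a finite acyclic digraph, if `x :: y :: l` is a directed path of maximum
length (so the first edge is `xy`), then there is no directed path of length 2
ending at `y`. -/
theorem stmt11 {V : Type} [Fintype V] (D : V → V → Prop) (hac : Acyclic D)
    (x y : V) (l : List V) (hp : IsPath D (x :: y :: l))
    (hmax : ∀ l' : List V, IsPath D l' → l'.length ≤ (x :: y :: l).length) :
    ¬ ∃ u w : V, IsPath D [u, w, y] := by
  rintro ⟨u, w, hP⟩
  obtain ⟨-, hnd3, hch3⟩ := hP
  simp only [List.Chain', List.isChain_cons_cons, List.isChain_singleton, and_true] at hch3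
  obtain ⟨hDuw, hDwy⟩ := hch3
  simp only [List.nodup_cons, List.mem_cons, List.mem_singleton,
    List.not_mem_nil, or_false, not_or, List.nodup_nil, and_true] at hnd3
  obtain ⟨⟨huw, huy⟩, hwy⟩ := hnd3
  obtain ⟨-, hnd, hch⟩ := hp
  have hndyl : (y :: l).Nodup := hnd.of_cons
  have hchyl : (y :: l).Chain' D := hch.tail
  -- helper: a nonempty prefix of (y :: l) ending at a member a
  have hpref : ∀ a : V, a ∈ y :: l → ∃ q : List V, q <+: (y :: l) ∧
      ∃ hq : q ≠ [], q.head hq = y ∧ q.getLast hq = a := by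
    intro a ha
    obtain ⟨s, t, heq⟩ := List.append_of_mem ha
    match s, heq with
    | [], heq =>
      have hay : y = a := by simpa using congrArg List.head? heq
      exact ⟨[a], ⟨t, by simpa using heq.symm⟩, by simp, by simp [hay], by simp⟩
    | c :: s', heq =>
      have hcy : c = y := by simpa using (congrArg List.head? heq).symm
      refine ⟨y :: (s' ++ [a]), ⟨t, by have h := heq.symm; rw [hcy] at h; simpa using h⟩,
        by simp, rfl, ?_⟩
      rw [List.getLast_cons (by simp), List.getLast_append]; simp
  by_cases hw : w ∈ y :: l
  · obtain ⟨q, hqp, hqne, hqh, hql⟩ := hpref w hw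
    exact closed_chain_absurd hac q hqne (hndyl.sublist hqp.sublist)
      (hchyl.prefix hqp) (by rw [hqh, hql]; exact hDwy)
  by_cases hu : u ∈ y :: l
  · obtain ⟨q, hqp, hqne, hqh, hql⟩ := hpref u hu
    have hwq : w ∉ q := fun h => hw (hqp.sublist.mem h)
    refine closed_chain_absurd hac (w :: q) (by simp) ?_ ?_ ?_
    · exact List.nodup_cons.mpr ⟨hwq, hndyl.sublist hqp.sublist⟩
    · refine List.isChain_cons.mpr ⟨?_, hchyl.prefix hqp⟩
      intro b hb
      have hb2 : q.head? = some b := hb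
      rw [List.head?_eq_head hqne, hqh] at hb2
      rw [(Option.some_inj.mp hb2).symm]; exact hDwy
    · rw [List.getLast_cons hqne, hql]
      simpa using hDuw
  · have hpath : IsPath D (u :: w :: y :: l) := by
      refine ⟨by simp, ?_, ?_⟩
      · refine List.nodup_cons.mpr ⟨?_, List.nodup_cons.mpr ⟨hw, hndyl⟩⟩
        simp only [List.mem_cons, not_or]
        exact ⟨huw, fun h => hu (by simp [h]), fun h => hu (by simp [h])⟩
      · exact List.isChain_cons_cons.mpr ⟨hDuw, List.isChain_cons_cons.mpr ⟨hDwy, hchyl⟩⟩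
    have := hmax _ hpath
    simp at this
end
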